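/- Let Δ, v, w be positive reals. Then: (i) for every t with 0 ≤ t ≤ Δ/(v + w), one has 1 − t·((v + w)/(v + 2w))·(w/Δ) ≥ 1 − t·(v + w)/Δ; (ii) Δ·(v + 2w)/(v + w)² > Δ/(v + w); and (iii) evaluating the CoordRed reduction formula at its maximal duration gives 1 − (Δ·(v + 2w)/(v + w)²)·((v + w)/(v + 2w))·(w/Δ) = v/(v + w) > 0. -/

import Mathlib

theorem stmt_15 (Δ v w : ℝ) (hΔ : 0 < Δ) (hv : 0 < v) (hw : 0 < w) :
    (∀ t : ℝ, 0 ≤ t → t ≤ Δ / (v + w) →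
      1 - t * ((v + w) / (v + 2 * w)) * (w / Δ) ≥ 1 - t * (v + w) / Δ) ∧
    Δ * (v + 2 * w) / (v + w) ^ 2 > Δ / (v + w) ∧
    (1 - Δ * (v + 2 * w) / (v + w) ^ 2 * ((v + w) / (v + 2 * w)) * (w / Δ) =
        v / (v + w) ∧
      (0:ℝ) < v / (v + w)) := by
  have hvw : 0 < v + w := by linarith
  have hvw2 : 0 < v + 2 * w := by linarith
  refine ⟨?_, ?_, ?_, ?_⟩
  · intro t ht _
    have h1 : t * ((v + w) / (v + 2 * w)) * (w / Δ) ≤ t * (v + w) / Δ := by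
      have e1 : t * ((v + w) / (v + 2 * w)) * (w / Δ) =
          (t * (v + w) * w) / ((v + 2 * w) * Δ) := by
        field_simp
      have e2 : t * (v + w) / Δ = (t * (v + w) * (v + 2 * w)) / ((v + 2 * w) * Δ) := by
        field_simp
      rw [e1, e2]
      gcongr
      nlinarith [mul_nonneg ht hvw.le]
    linarith
  · rw [gt_iff_lt, div_lt_div_iff₀ (by positivity) (by positivity)]
    ring_nf
    nlinarith [mul_pos hΔ (mul_pos hw hvw)]
  · field_simp
    ring
  · positivity
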